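/- For every Δθ with 0 < Δθ < π/2, we have 4/sin(Δθ) < 2π/Δθ. Consequently, for any fixed sagitta level corresponding to a central angle Δθ_min ∈ (0, π/2), the irregular polygon side count M_irr = 4/sin(Δθ_min) is strictly smaller than the regular polygon side count M_reg = 2π/Δθ_min with per-side sagitta equal to that minimum sagitta. -/

import Mathlib

open Real (pi)
open scoped Real

/-- **The irregular polygon needs fewer sides than the regular one.**
For every `Δθ` with `0 < Δθ < π/2`, we have `4/sin Δθ < 2π/Δθ`. Consequently, for any
fixed sagitta level corresponding to a central angle `Δθ_min ∈ (0, π/2)`, the irregular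
polygon side count `M_irr = 4/sin(Δθ_min)` is strictly smaller than the regular polygon
side count `M_reg = 2π/Δθ_min` with per-side sagitta equal to that minimum sagitta. -/
theorem irregular_side_count_lt_regular
    (Δθ : ℝ) (h0 : 0 < Δθ) (h2 : Δθ < π / 2) :
    4 / Real.sin Δθ < 2 * π / Δθ := by
  have hπ : (0:ℝ) < π := Real.pi_pos
  have hs : 0 < Real.sin Δθ := Real.sin_pos_of_pos_of_lt_pi h0 (by linarith)
  -- strict Jordan's inequality: 2/π * Δθ < sin Δθ
  have ht : 0 < 2 * Δθ / π := by positivity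
  have ht1 : 2 * Δθ / π < 1 := by
    rw [div_lt_one hπ]; linarith
  have hconv := strictConcaveOn_sin_Icc.2
    (Set.mem_Icc.mpr ⟨le_rfl, hπ.le⟩)
    (Set.mem_Icc.mpr ⟨by positivity, by linarith⟩)
    (show (0:ℝ) ≠ π / 2 by positivity)
    (show (0:ℝ) < 1 - 2 * Δθ / π by linarith) ht (by ring)
  have hline : (1 - 2 * Δθ / π) • (0:ℝ) + (2 * Δθ / π) • (π / 2) = Δθ := by
    simp only [smul_eq_mul, mul_zero, zero_add]
    rw [div_mul_eq_mul_div, div_eq_iff hπ.ne']; ring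
  rw [hline] at hconv
  simp [Real.sin_pi_div_two] at hconv
  have hj : 2 * Δθ / π < Real.sin Δθ := by
    calc 2 * Δθ / π = (1 - 2 * Δθ / π) * Real.sin 0 + (2 * Δθ / π) * Real.sin (π / 2) := by
          simp
      _ < Real.sin Δθ := by simpa [smul_eq_mul, hline] using hconv
  rw [div_lt_div_iff₀ hs h0]
  have := (div_lt_iff₀ hπ).mp hj
  nlinarith
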